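/- Let M > 0 and r > 2M, with μ = 1 − 2M/r, Δ = r² − 2Mr, f(r) = 2(r−2M)(r−3M)/r², q(r) = 3MΔ/r⁴, B^a(r) = 2r^{−3}(r−3M)², B⁰(r) = −3M r^{−4}(3r² − 20Mr + 30M²). Then r^{−2}(B^a + B⁰) − d/dr [ (Δ^{1/2}/2)( d/dr( f(r−3M)/(2r²Δ^{1/2}) ) − (r−3M) q /(r² Δ^{1/2}) ) ] = (3/2) M r^{−6} (6r² − 32Mr + 45M²), and this expression is strictly positive for all r > 2M (indeed 6r² − 32Mr + 45M² > 0 for all real r since its discriminant is negative). -/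

import Mathlib

namespace MorawetzAux

variable (M : ℝ)

lemma basic {x : ℝ} (hM : 0 < M) (hx : 2 * M < x) :
    0 < x ∧ 0 < x ^ 2 - 2 * M * x ∧ Real.sqrt (x ^ 2 - 2 * M * x) ≠ 0 := by
  have hx0 : 0 < x := lt_trans (by linarith) hx
  have hq : 0 < x ^ 2 - 2 * M * x := by nlinarith
  exact ⟨hx0, hq, by positivity⟩

lemma innerEq (hM : 0 < M) {y : ℝ} (hy : 2 * M < y) :
    (2 * (y - 2 * M) * (y - 3 * M) / y ^ 2) * (y - 3 * M)
        / (2 * y ^ 2 * Real.sqrt (y ^ 2 - 2 * M * y))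
      = (y - 3 * M) ^ 2 / y ^ 5 * Real.sqrt (y ^ 2 - 2 * M * y) := by
  obtain ⟨hy0, hq, hs⟩ := basic M hM hy
  have hs2 : Real.sqrt (y ^ 2 - 2 * M * y) * Real.sqrt (y ^ 2 - 2 * M * y)
      = y ^ 2 - 2 * M * y := Real.mul_self_sqrt hq.le
  have hy0' : y ≠ 0 := ne_of_gt hy0
  generalize Real.sqrt (y ^ 2 - 2 * M * y) = s at hs hs2 ⊢
  field_simp
  linear_combination (-(y - 3 * M) ^ 2) * hs2

lemma hasDerivP (hM : 0 < M) {x : ℝ} (hx : 2 * M < x) :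
    HasDerivAt (fun y => (y - 3 * M) ^ 2 / y ^ 5 * Real.sqrt (y ^ 2 - 2 * M * y))
      ((x - 3 * M) * (15 * M - 3 * x) / x ^ 6 * Real.sqrt (x ^ 2 - 2 * M * x)
        + (x - 3 * M) ^ 2 * (x - M) / (x ^ 5 * Real.sqrt (x ^ 2 - 2 * M * x))) x := by
  obtain ⟨hx0, hq, hs⟩ := basic M hM hx
  have h1 : HasDerivAt (fun y : ℝ => (y - 3 * M) ^ 2) (2 * (x - 3 * M)) x := by
    have := ((hasDerivAt_id x).sub_const (3 * M)).pow 2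
    exact this.congr_deriv (by simp)
  have h2 : HasDerivAt (fun y : ℝ => y ^ 5) (5 * x ^ 4) x := by
    simpa using hasDerivAt_pow 5 x
  have hA : HasDerivAt (fun y : ℝ => (y - 3 * M) ^ 2 / y ^ 5)
      ((2 * (x - 3 * M) * x ^ 5 - (x - 3 * M) ^ 2 * (5 * x ^ 4)) / (x ^ 5) ^ 2) x :=
    h1.div h2 (by positivity)
  have hu : HasDerivAt (fun y : ℝ => y ^ 2 - 2 * M * y) (2 * x - 2 * M) x := by
    have := (hasDerivAt_pow 2 x).sub ((hasDerivAt_id x).const_mul (2 * M))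
    exact this.congr_deriv (by norm_num)
  have hsq : HasDerivAt (fun y : ℝ => Real.sqrt (y ^ 2 - 2 * M * y))
      (1 / (2 * Real.sqrt (x ^ 2 - 2 * M * x)) * (2 * x - 2 * M)) x :=
    (Real.hasDerivAt_sqrt (ne_of_gt hq)).comp x hu
  have := hA.mul hsq
  refine this.congr_deriv ?_
  have hx0' : x ≠ 0 := ne_of_gt hx0
  field_simp
  ring

lemma derivInner (hM : 0 < M) {x : ℝ} (hx : 2 * M < x) :
    deriv (fun y => (2 * (y - 2 * M) * (y - 3 * M) / y ^ 2) * (y - 3 * M)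
        / (2 * y ^ 2 * Real.sqrt (y ^ 2 - 2 * M * y))) x
      = (x - 3 * M) * (15 * M - 3 * x) / x ^ 6 * Real.sqrt (x ^ 2 - 2 * M * x)
        + (x - 3 * M) ^ 2 * (x - M) / (x ^ 5 * Real.sqrt (x ^ 2 - 2 * M * x)) := by
  have heq : (fun y => (2 * (y - 2 * M) * (y - 3 * M) / y ^ 2) * (y - 3 * M)
        / (2 * y ^ 2 * Real.sqrt (y ^ 2 - 2 * M * y)))
      =ᶠ[nhds x] (fun y => (y - 3 * M) ^ 2 / y ^ 5 * Real.sqrt (y ^ 2 - 2 * M * y)) :=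
    Filter.eventuallyEq_of_mem (isOpen_Ioi.mem_nhds hx) (fun y hy => innerEq M hM hy)
  rw [heq.deriv_eq, (hasDerivP M hM hx).deriv]

/-- The outer function agrees with an explicit rational function on `Ioi (2M)`. -/
lemma outerEq (hM : 0 < M) {x : ℝ} (hx : 2 * M < x) :
    (Real.sqrt (x ^ 2 - 2 * M * x) / 2) *
        (deriv (fun y => (2 * (y - 2 * M) * (y - 3 * M) / y ^ 2) * (y - 3 * M)
            / (2 * y ^ 2 * Real.sqrt (y ^ 2 - 2 * M * y))) x
          - (x - 3 * M) * (3 * M * (x ^ 2 - 2 * M * x) / x ^ 4)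
            / (x ^ 2 * Real.sqrt (x ^ 2 - 2 * M * x)))
      = (-2 * x ^ 3 + 20 * M * x ^ 2 - 63 * M ^ 2 * x + 63 * M ^ 3) / (2 * x ^ 5) := by
  obtain ⟨hx0, hq, hs⟩ := basic M hM hx
  have hs2 : Real.sqrt (x ^ 2 - 2 * M * x) * Real.sqrt (x ^ 2 - 2 * M * x)
      = x ^ 2 - 2 * M * x := Real.mul_self_sqrt hq.le
  have hx0' : x ≠ 0 := ne_of_gt hx0
  rw [derivInner M hM hx]
  generalize Real.sqrt (x ^ 2 - 2 * M * x) = s at hs hs2 ⊢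
  field_simp
  linear_combination ((x - 3 * M) * (15 * M - 3 * x)) * hs2

end MorawetzAux

/-- The key positivity computation in the Morawetz estimate for the Dirac wave system on
Schwarzschild: with `μ = 1 − 2M/r`, `Δ = r² − 2Mr`, `f = 2(r−2M)(r−3M)/r²`, `q = 3MΔ/r⁴`,
`B^a = 2r^{−3}(r−3M)²` and `B⁰ = −3Mr^{−4}(3r² − 20Mr + 30M²)`, one has, for `r > 2M`,
`r^{−2}(B^a + B⁰) − d/dr[ (Δ^{1/2}/2)( (f(r−3M)/(2r²Δ^{1/2}))' − (r−3M)q/(r²Δ^{1/2}) ) ]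
  = (3/2) M r^{−6} (6r² − 32Mr + 45M²)`,
this quantity is strictly positive, and indeed `6r² − 32Mr + 45M² > 0` for all real `r`. -/
theorem morawetz_positivity (M : ℝ) (hM : 0 < M) (r : ℝ) (hr : 2 * M < r) :
    (r ^ 2)⁻¹ * (2 * (r ^ 3)⁻¹ * (r - 3 * M) ^ 2
          + (-3 * M * (r ^ 4)⁻¹ * (3 * r ^ 2 - 20 * M * r + 30 * M ^ 2)))
      - deriv (fun x => (Real.sqrt (x ^ 2 - 2 * M * x) / 2) *
          (deriv (fun y => (2 * (y - 2 * M) * (y - 3 * M) / y ^ 2) * (y - 3 * M)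
              / (2 * y ^ 2 * Real.sqrt (y ^ 2 - 2 * M * y))) x
            - (x - 3 * M) * (3 * M * (x ^ 2 - 2 * M * x) / x ^ 4)
              / (x ^ 2 * Real.sqrt (x ^ 2 - 2 * M * x)))) r
      = (3 / 2) * M * (r ^ 6)⁻¹ * (6 * r ^ 2 - 32 * M * r + 45 * M ^ 2) ∧
    0 < (3 / 2) * M * (r ^ 6)⁻¹ * (6 * r ^ 2 - 32 * M * r + 45 * M ^ 2) ∧
    ∀ x : ℝ, 0 < 6 * x ^ 2 - 32 * M * x + 45 * M ^ 2 := by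
  obtain ⟨hr0, hq, hs⟩ := MorawetzAux.basic M hM hr
  have hr0' : r ≠ 0 := ne_of_gt hr0
  have hquad : ∀ x : ℝ, 0 < 6 * x ^ 2 - 32 * M * x + 45 * M ^ 2 := by
    intro x
    nlinarith [sq_nonneg (6 * x - 16 * M), mul_pos hM hM]
  refine ⟨?_, mul_pos (by positivity) (hquad r), hquad⟩
  have heq : (fun x => (Real.sqrt (x ^ 2 - 2 * M * x) / 2) *
          (deriv (fun y => (2 * (y - 2 * M) * (y - 3 * M) / y ^ 2) * (y - 3 * M)
              / (2 * y ^ 2 * Real.sqrt (y ^ 2 - 2 * M * y))) x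
            - (x - 3 * M) * (3 * M * (x ^ 2 - 2 * M * x) / x ^ 4)
              / (x ^ 2 * Real.sqrt (x ^ 2 - 2 * M * x))))
      =ᶠ[nhds r] (fun x => (-2 * x ^ 3 + 20 * M * x ^ 2 - 63 * M ^ 2 * x + 63 * M ^ 3)
          / (2 * x ^ 5)) :=
    Filter.eventuallyEq_of_mem (isOpen_Ioi.mem_nhds hr) (fun x hx => MorawetzAux.outerEq M hM hx)
  have hn : HasDerivAt (fun x : ℝ => -2 * x ^ 3 + 20 * M * x ^ 2 - 63 * M ^ 2 * x + 63 * M ^ 3)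
      (-6 * r ^ 2 + 40 * M * r - 63 * M ^ 2) r := by
    have h3 := hasDerivAt_pow 3 r
    have h2 := hasDerivAt_pow 2 r
    have h1 := hasDerivAt_id r
    have := (((h3.const_mul (-2)).add (h2.const_mul (20 * M))).sub
      (h1.const_mul (63 * M ^ 2))).add_const (63 * M ^ 3)
    refine this.congr_deriv ?_
    push_cast
    ring
  have hd : HasDerivAt (fun x : ℝ => 2 * x ^ 5) (10 * r ^ 4) r := by
    have := (hasDerivAt_pow 5 r).const_mul (2 : ℝ)
    refine this.congr_deriv ?_
    push_cast; ring
  have hG : HasDerivAt (fun x : ℝ => (-2 * x ^ 3 + 20 * M * x ^ 2 - 63 * M ^ 2 * x + 63 * M ^ 3)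
      / (2 * x ^ 5))
      (((-6 * r ^ 2 + 40 * M * r - 63 * M ^ 2) * (2 * r ^ 5)
        - (-2 * r ^ 3 + 20 * M * r ^ 2 - 63 * M ^ 2 * r + 63 * M ^ 3) * (10 * r ^ 4))
        / (2 * r ^ 5) ^ 2) r := hn.div hd (by positivity)
  rw [heq.deriv_eq, hG.deriv]
  field_simp
  ring
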